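/- arXiv:1203.0481 — 6 statements merged into one kernel-verified Lean document; each statement's English description precedes it below -/
import Mathlib

section
/- Let A be an attractor of the IFS F with basin B(A), let x_0 ∈ B(A) and let σ ∈ Σ^∞. Then the chaos game orbit (x_k)_{k≥0} of x_0 driven by σ is a totally bounded subset of X; consequently the sets C_K(x_0,σ) form a decreasing sequence of nonempty compact sets that converges in the Hausdorff metric to the nonempty compact set C_∞(x_0,σ) = ⋂_{K≥1} C_K(x_0,σ). -/
open Metric Filter Set MeasureTheory

variable {X : Type*} [MetricSpace X] [CompleteSpace X]
variable {Λ : Type*} [Fintype Λ] [Nonempty Λ]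

/-- The Hutchinson operator of the IFS given by the maps `f a`, `a : Λ`. -/
def Hutch (f : Λ → X → X) (B : Set X) : Set X := ⋃ a : Λ, f a '' B

/-- `A` attracts, under iteration of the Hutchinson operator, every nonempty
compact subset of `U`, in the Hausdorff metric. -/
def Attracts (f : Λ → X → X) (A U : Set X) : Prop :=
  ∀ B : Set X, B.Nonempty → IsCompact B → B ⊆ U →
    Tendsto (fun k : ℕ => hausdorffDist ((Hutch f)^[k] B) A) atTop (nhds 0)

/-- `A` is an attractor of the IFS `f`: a nonempty compact set admitting an open
neighbourhood `U ⊇ A` all of whose nonempty compact subsets are attracted to `A`. -/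
def IsAttractor (f : Λ → X → X) (A : Set X) : Prop :=
  A.Nonempty ∧ IsCompact A ∧ ∃ U : Set X, IsOpen U ∧ A ⊆ U ∧ Attracts f A U

/-- The basin of the attractor `A`: the union of all open `U ⊇ A` from which `A` attracts. -/
def basin (f : Λ → X → X) (A : Set X) : Set X :=
  ⋃₀ {U : Set X | IsOpen U ∧ A ⊆ U ∧ Attracts f A U}

/-- The chaos game orbit of `x₀` driven by the sequence `σ` (0-indexed: `σ 0` acts first). -/
def orbit (f : Λ → X → X) (σ : ℕ → Λ) (x₀ : X) : ℕ → X
  | 0 => x₀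
  | k + 1 => f (σ k) (orbit f σ x₀ k)

/-- `C_K(x₀,σ)`: the closure of the tail `{x_k : k ≥ K}` of the chaos game orbit. -/
def tailSet (f : Λ → X → X) (σ : ℕ → Λ) (x₀ : X) (K : ℕ) : Set X :=
  closure {y : X | ∃ k : ℕ, K ≤ k ∧ orbit f σ x₀ k = y}

/-- `C_∞(x₀,σ) = ⋂_K C_K(x₀,σ)`. -/
def Cinf (f : Λ → X → X) (σ : ℕ → Λ) (x₀ : X) : Set X :=
  ⋂ K : ℕ, tailSet f σ x₀ K

/-- For a word `w = (σ₁, …, σ_m)`, `wordApply f w = f_{σ_m} ∘ ⋯ ∘ f_{σ_1}`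
(the letter `w 0` acts first). -/
def wordApply (f : Λ → X → X) {m : ℕ} (w : Fin m → Λ) (x : X) : X :=
  (List.ofFn w).foldl (fun y a => f a y) x

/-- A sequence of symbols is disjunctive if it contains every finite word
as a block of consecutive letters. -/
def Disjunctive {Γ : Type*} (σ : ℕ → Γ) : Prop :=
  ∀ (m : ℕ) (w : Fin m → Γ), ∃ j : ℕ, ∀ l : Fin m, σ (j + l.1) = w l

/-- `fibreComp f ρ K = f_{ρ_1} ∘ f_{ρ_2} ∘ ⋯ ∘ f_{ρ_K}` (0-indexed: `f (ρ 0) ∘ ⋯ ∘ f (ρ (K-1))`). -/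
def fibreComp (f : Λ → X → X) (ρ : ℕ → Λ) : ℕ → X → X
  | 0 => id
  | K + 1 => fibreComp f ρ K ∘ f (ρ K)

/-- The fibre `A_ρ = ⋂_{K ≥ 1} f_{ρ_1} ∘ ⋯ ∘ f_{ρ_K}(A)` of the attractor `A`. -/
def fibre (f : Λ → X → X) (A : Set X) (ρ : ℕ → Λ) : Set X :=
  ⋂ K : ℕ, fibreComp f ρ (K + 1) '' A

/-- `A` is strongly fibred: every open set meeting `A` contains a fibre. -/
def StronglyFibred (f : Λ → X → X) (A : Set X) : Prop :=
  ∀ U : Set X, IsOpen U → (U ∩ A).Nonempty → ∃ ρ : ℕ → Λ, fibre f A ρ ⊆ U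

/-- the chaos game orbit is totally bounded; the tail sets
`C_K(x₀,σ)` form a decreasing sequence of nonempty compact sets converging in the
Hausdorff metric to the nonempty compact set `C_∞(x₀,σ) = ⋂_K C_K(x₀,σ)`. -/
theorem chaosGame_tailSets
    (f : Λ → X → X) (hf : ∀ a : Λ, Continuous (f a))
    (A : Set X) (hA : IsAttractor f A)
    (x₀ : X) (hx₀ : x₀ ∈ basin f A) (σ : ℕ → Λ) :
    TotallyBounded (Set.range (orbit f σ x₀)) ∧
    (∀ K : ℕ, (tailSet f σ x₀ K).Nonempty ∧ IsCompact (tailSet f σ x₀ K) ∧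
      tailSet f σ x₀ (K + 1) ⊆ tailSet f σ x₀ K) ∧
    (Cinf f σ x₀).Nonempty ∧ IsCompact (Cinf f σ x₀) ∧
    Tendsto (fun K : ℕ => hausdorffDist (tailSet f σ x₀ K) (Cinf f σ x₀)) atTop (nhds 0) := by
  classical
  obtain ⟨U, ⟨hUopen, hAU, hUattr⟩, hx₀U⟩ := hx₀
  obtain ⟨hAne, hAcomp, -⟩ := hA
  set S : ℕ → Set X := fun k => (Hutch f)^[k] {x₀} with hSdef
  have hSsucc : ∀ k, S (k + 1) = Hutch f (S k) := by
    intro k; simp [hSdef, Function.iterate_succ_apply']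
  have horb : ∀ k, orbit f σ x₀ k ∈ S k := by
    intro k
    induction k with
    | zero => simp [hSdef, orbit]
    | succ k ih =>
      rw [hSsucc, show orbit f σ x₀ (k + 1) = f (σ k) (orbit f σ x₀ k) from rfl]
      exact Set.mem_iUnion.2 ⟨σ k, Set.mem_image_of_mem _ ih⟩
  have hScomp : ∀ k, IsCompact (S k) := by
    intro k
    induction k with
    | zero => exact isCompact_singleton
    | succ k ih =>
      rw [hSsucc]
      exact isCompact_iUnion fun a => ih.image (hf a)
  have hSne : ∀ k, (S k).Nonempty := fun k => ⟨_, horb k⟩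
  have htend := hUattr {x₀} ⟨x₀, rfl⟩ isCompact_singleton (Set.singleton_subset_iff.2 hx₀U)
  -- the key estimate: the orbit eventually stays close to A
  have hkey : ∀ ε : ℝ, 0 < ε → ∃ N : ℕ, ∀ k, N ≤ k → infDist (orbit f σ x₀ k) A < ε := by
    intro ε hε
    obtain ⟨N, hN⟩ := (Metric.tendsto_atTop.1 htend) ε hε
    refine ⟨N, fun k hk => ?_⟩
    have hfin : EMetric.hausdorffEdist (S k) A ≠ ⊤ :=
      hausdorffEdist_ne_top_of_nonempty_of_bounded (hSne k) hAne (hScomp k).isBounded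
        hAcomp.isBounded
    have h1 : infDist (orbit f σ x₀ k) A ≤ hausdorffDist (S k) A :=
      infDist_le_hausdorffDist_of_mem (horb k) hfin
    have h2 := hN k hk
    rw [Real.dist_eq, sub_zero, abs_of_nonneg hausdorffDist_nonneg] at h2
    exact lt_of_le_of_lt h1 h2
  -- total boundedness of the orbit
  have hTB : TotallyBounded (Set.range (orbit f σ x₀)) := by
    rw [Metric.totallyBounded_iff]
    intro ε hε
    obtain ⟨N, hN⟩ := hkey (ε / 2) (by positivity)
    obtain ⟨t, htfin, htA⟩ :=
      (Metric.totallyBounded_iff.1 hAcomp.totallyBounded) (ε / 2) (by positivity)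
    refine ⟨(fun k => orbit f σ x₀ k) '' Set.Iio N ∪ t,
      ((Set.finite_Iio N).image _).union htfin, ?_⟩
    rintro x ⟨k, rfl⟩
    by_cases hk : k < N
    · refine Set.mem_biUnion (Set.mem_union_left _ ⟨k, hk, rfl⟩) ?_
      simpa using hε
    · push_neg at hk
      obtain ⟨a, haA, hda⟩ := hAcomp.exists_infDist_eq_dist hAne (orbit f σ x₀ k)
      have h1 : dist (orbit f σ x₀ k) a < ε / 2 := by rw [← hda]; exact hN k hk
      obtain ⟨y, hy, hay⟩ := Set.mem_iUnion₂.1 (htA haA)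
      refine Set.mem_biUnion (Set.mem_union_right _ hy) ?_
      have : dist (orbit f σ x₀ k) y < ε := by
        calc dist (orbit f σ x₀ k) y ≤ dist (orbit f σ x₀ k) a + dist a y := dist_triangle _ _ _
        _ < ε / 2 + ε / 2 := add_lt_add h1 (by exact mem_ball.1 hay)
        _ = ε := by ring
      exact mem_ball.2 this
  -- properties of tail sets
  have hsub : ∀ K, {y : X | ∃ k : ℕ, K ≤ k ∧ orbit f σ x₀ k = y} ⊆ Set.range (orbit f σ x₀) := by
    rintro K y ⟨k, _, rfl⟩; exact ⟨k, rfl⟩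
  have htailcomp : ∀ K, IsCompact (tailSet f σ x₀ K) := by
    intro K
    exact TotallyBounded.isCompact_of_isClosed
      ((hTB.subset (hsub K)).closure) isClosed_closure
  have htailne : ∀ K, (tailSet f σ x₀ K).Nonempty :=
    fun K => ⟨orbit f σ x₀ K, subset_closure ⟨K, le_refl K, rfl⟩⟩
  have htailmono : ∀ K L : ℕ, K ≤ L → tailSet f σ x₀ L ⊆ tailSet f σ x₀ K := by
    intro K L hKL
    apply closure_mono
    rintro y ⟨k, hk, rfl⟩
    exact ⟨k, le_trans hKL hk, rfl⟩
  have hCcomp : IsCompact (Cinf f σ x₀) :=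
    (htailcomp 0).of_isClosed_subset (isClosed_iInter fun K => isClosed_closure)
      (Set.iInter_subset _ 0)
  have hCne : (Cinf f σ x₀).Nonempty :=
    IsCompact.nonempty_iInter_of_sequence_nonempty_isCompact_isClosed _
      (fun K => htailmono K (K + 1) (Nat.le_succ K)) htailne (htailcomp 0)
      (fun K => isClosed_closure)
  have hCsub : ∀ K, Cinf f σ x₀ ⊆ tailSet f σ x₀ K := fun K => Set.iInter_subset _ K
  -- convergence in the Hausdorff metric
  have hconv : Tendsto (fun K : ℕ => hausdorffDist (tailSet f σ x₀ K) (Cinf f σ x₀))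
      atTop (nhds 0) := by
    rw [Metric.tendsto_atTop]
    intro ε hε
    -- there is K with tailSet K ⊆ thickening (ε/2) Cinf
    have hthick : ∃ K : ℕ, tailSet f σ x₀ K ⊆ thickening (ε / 2) (Cinf f σ x₀) := by
      by_contra hcon
      push_neg at hcon
      set D : ℕ → Set X := fun K => tailSet f σ x₀ K \ thickening (ε / 2) (Cinf f σ x₀)
        with hDdef
      have hDcl : ∀ K, IsClosed (D K) := fun K =>
        isClosed_closure.sdiff isOpen_thickening
      have hDne : ∀ K, (D K).Nonempty := by
        intro K
        obtain ⟨y, hy1, hy2⟩ := Set.not_subset.1 (hcon K)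
        exact ⟨y, hy1, hy2⟩
      have hDmono : ∀ K, D (K + 1) ⊆ D K := fun K =>
        Set.diff_subset_diff_left (htailmono K (K + 1) (Nat.le_succ K))
      have hD0 : IsCompact (D 0) := (htailcomp 0).of_isClosed_subset (hDcl 0) Set.diff_subset
      obtain ⟨z, hz⟩ := IsCompact.nonempty_iInter_of_sequence_nonempty_isCompact_isClosed _
        hDmono hDne hD0 hDcl
      have hz1 : z ∈ Cinf f σ x₀ :=
        Set.mem_iInter.2 fun K => (Set.mem_iInter.1 hz K).1
      have hz2 : z ∉ thickening (ε / 2) (Cinf f σ x₀) := (Set.mem_iInter.1 hz 0).2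
      exact hz2 (self_subset_thickening (by positivity) _ hz1)
    obtain ⟨K, hK⟩ := hthick
    refine ⟨K, fun L hL => ?_⟩
    have hLsub : tailSet f σ x₀ L ⊆ thickening (ε / 2) (Cinf f σ x₀) :=
      (htailmono K L hL).trans hK
    have hdle : hausdorffDist (tailSet f σ x₀ L) (Cinf f σ x₀) ≤ ε / 2 := by
      apply hausdorffDist_le_of_infDist (by positivity)
      · intro x hx
        obtain ⟨z, hz, hdz⟩ := mem_thickening_iff.1 (hLsub hx)
        exact le_trans (infDist_le_dist_of_mem hz) hdz.le
      · intro y hy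
        rw [(infDist_zero_of_mem (hCsub L hy) : infDist y (tailSet f σ x₀ L) = 0)]
        positivity
    rw [Real.dist_eq, sub_zero, abs_of_nonneg hausdorffDist_nonneg]
    exact lt_of_le_of_lt hdle (by linarith)
  exact ⟨hTB, fun K => ⟨htailne K, htailcomp K, htailmono K (K + 1) (Nat.le_succ K)⟩,
    hCne, hCcomp, hconv⟩
end

section
/- Let A be an attractor of the IFS F with basin B(A), let x_0 ∈ B(A) and let σ ∈ Σ^∞. Then C_∞(x_0,σ) ⊆ A. -/
open Metric Filter Set MeasureTheory

variable {X : Type*} [MetricSpace X] [CompleteSpace X]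
variable {Λ : Type*} [Fintype Λ] [Nonempty Λ]

/-- Lemma 1: `C_∞(x₀,σ) ⊆ A` for every `x₀` in the basin of `A`
and every `σ ∈ Σ^∞`. -/
theorem chaosGame_Cinf_subset_attractor
    (f : Λ → X → X) (hf : ∀ a : Λ, Continuous (f a))
    (A : Set X) (hA : IsAttractor f A)
    (x₀ : X) (hx₀ : x₀ ∈ basin f A) (σ : ℕ → Λ) :
    Cinf f σ x₀ ⊆ A := by
  obtain ⟨U, ⟨hUopen, hAU, hUattr⟩, hxU⟩ := hx₀
  obtain ⟨hAne, hAcomp, -⟩ := hA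
  have hiter : ∀ k : ℕ, IsCompact ((Hutch f)^[k] {x₀}) ∧ ((Hutch f)^[k] {x₀}).Nonempty := by
    intro k
    induction k with
    | zero => simpa using ⟨isCompact_singleton, Set.singleton_nonempty x₀⟩
    | succ k ih =>
      rw [Function.iterate_succ_apply']
      refine ⟨isCompact_iUnion fun a => ih.1.image (hf a), ?_⟩
      obtain ⟨z, hz⟩ := ih.2
      exact ⟨f (Classical.arbitrary Λ) z,
        Set.mem_iUnion.2 ⟨Classical.arbitrary Λ, Set.mem_image_of_mem _ hz⟩⟩
  have horb : ∀ k : ℕ, orbit f σ x₀ k ∈ (Hutch f)^[k] {x₀} := by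
    intro k
    induction k with
    | zero => simp [orbit]
    | succ k ih =>
      rw [Function.iterate_succ_apply']
      exact Set.mem_iUnion.2 ⟨σ k, Set.mem_image_of_mem _ ih⟩
  have htend := hUattr {x₀} (Set.singleton_nonempty x₀) isCompact_singleton
    (Set.singleton_subset_iff.2 hxU)
  intro y hy
  rw [(hAcomp.isClosed.mem_iff_infDist_zero hAne : y ∈ A ↔ _)]
  have hle : ∀ ε : ℝ, 0 < ε → Metric.infDist y A ≤ ε := by
    intro ε hε
    obtain ⟨K, hK⟩ := (Metric.tendsto_atTop.1 htend ε hε)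
    have hyK : y ∈ tailSet f σ x₀ K := Set.mem_iInter.1 hy K
    have hsub : tailSet f σ x₀ K ⊆ {z | Metric.infDist z A ≤ ε} := by
      refine closure_minimal ?_ (isClosed_le (Metric.continuous_infDist_pt A) continuous_const)
      rintro z ⟨k, hk, rfl⟩
      have hne : EMetric.hausdorffEdist ((Hutch f)^[k] {x₀}) A ≠ ⊤ :=
        Metric.hausdorffEdist_ne_top_of_nonempty_of_bounded (hiter k).2 hAne
          (hiter k).1.isBounded hAcomp.isBounded
      have h1 := Metric.infDist_le_hausdorffDist_of_mem (horb k) hne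
      have h2 := hK k hk
      rw [Real.dist_eq, abs_sub_lt_iff] at h2
      have := h2.1
      simp only [sub_zero] at this
      exact Set.mem_setOf_eq ▸ le_of_lt (lt_of_le_of_lt h1 this)
    exact hsub hyK
  have h0 : Metric.infDist y A ≤ 0 := by
    refine le_of_forall_pos_le_add fun ε hε => ?_
    simpa using hle ε hε
  exact le_antisymm h0 Metric.infDist_nonneg
end

section
/- Let A be an attractor of the IFS F with basin B(A), let x_0 ∈ B(A) and let σ ∈ Σ^∞. Then C_∞(x_0,σ) ⊆ F(C_∞(x_0,σ)) = ⋃_{τ∈Σ} f_τ(C_∞(x_0,σ)). -/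
open Metric Filter Set MeasureTheory

variable {X : Type*} [MetricSpace X] [CompleteSpace X]
variable {Λ : Type*} [Fintype Λ] [Nonempty Λ]

lemma orbit_mem_iterate (f : Λ → X → X) (σ : ℕ → Λ) (x₀ : X) :
    ∀ k, orbit f σ x₀ k ∈ (Hutch f)^[k] {x₀}
  | 0 => by simp [orbit]
  | (k + 1) => by
    rw [Function.iterate_succ_apply']
    exact Set.mem_iUnion.2 ⟨σ k, Set.mem_image_of_mem _ (orbit_mem_iterate f σ x₀ k)⟩

lemma hutch_iterate_compact (f : Λ → X → X) (hf : ∀ a : Λ, Continuous (f a))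
    {B : Set X} (hB : IsCompact B) (k : ℕ) : IsCompact ((Hutch f)^[k] B) := by
  induction k with
  | zero => exact hB
  | succ k ih =>
    rw [Function.iterate_succ_apply']
    exact isCompact_iUnion fun a => ih.image (hf a)

lemma hutch_iterate_nonempty (f : Λ → X → X) {B : Set X} (hB : B.Nonempty) (k : ℕ) :
    ((Hutch f)^[k] B).Nonempty := by
  induction k with
  | zero => exact hB
  | succ k ih =>
    rw [Function.iterate_succ_apply']
    obtain ⟨a⟩ := ‹Nonempty Λ›
    exact ⟨f a ih.choose, Set.mem_iUnion.2 ⟨a, Set.mem_image_of_mem _ ih.choose_spec⟩⟩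

/-- Lemma 4: `C_∞(x₀,σ) ⊆ F(C_∞(x₀,σ)) = ⋃_{τ∈Σ} f_τ(C_∞(x₀,σ))`. -/
theorem chaosGame_Cinf_subset_hutchinson
    (f : Λ → X → X) (hf : ∀ a : Λ, Continuous (f a))
    (A : Set X) (hA : IsAttractor f A)
    (x₀ : X) (hx₀ : x₀ ∈ basin f A) (σ : ℕ → Λ) :
    Cinf f σ x₀ ⊆ Hutch f (Cinf f σ x₀) := by
  obtain ⟨hAne, hAcpt, -⟩ := hA
  obtain ⟨U, ⟨hUopen, hAU, hUattr⟩, hx₀U⟩ := hx₀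
  set x : ℕ → X := orbit f σ x₀ with hx
  -- the Hausdorff distance of the iterates of {x₀} to A tends to 0
  have htend : Tendsto (fun k : ℕ => hausdorffDist ((Hutch f)^[k] {x₀}) A) atTop (nhds 0) :=
    hUattr {x₀} (Set.singleton_nonempty _) isCompact_singleton (Set.singleton_subset_iff.2 hx₀U)
  -- hence infDist (x k) A → 0
  have hinf : ∀ ε : ℝ, 0 < ε → ∃ K : ℕ, ∀ k ≥ K, infDist (x k) A < ε := by
    intro ε hε
    have := (Metric.tendsto_nhds.1 htend ε hε)
    rw [eventually_atTop] at this
    obtain ⟨K, hK⟩ := this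
    refine ⟨K, fun k hk => ?_⟩
    have hne : ((Hutch f)^[k] {x₀}).Nonempty :=
      hutch_iterate_nonempty f (Set.singleton_nonempty _) k
    have hcpt : IsCompact ((Hutch f)^[k] {x₀}) :=
      hutch_iterate_compact f hf isCompact_singleton k
    have hmem : x k ∈ (Hutch f)^[k] {x₀} := orbit_mem_iterate f σ x₀ k
    have hedist : EMetric.hausdorffEdist ((Hutch f)^[k] {x₀}) A ≠ ⊤ :=
      Metric.hausdorffEdist_ne_top_of_nonempty_of_bounded hne hAne
        hcpt.isBounded hAcpt.isBounded
    have hle : infDist (x k) A ≤ hausdorffDist ((Hutch f)^[k] {x₀}) A :=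
      Metric.infDist_le_hausdorffDist_of_mem hmem hedist
    have := hK k hk
    calc infDist (x k) A ≤ hausdorffDist ((Hutch f)^[k] {x₀}) A := hle
      _ ≤ |hausdorffDist ((Hutch f)^[k] {x₀}) A - 0| := by
          rw [sub_zero]; exact le_abs_self _
      _ < ε := by rw [← Real.dist_eq]; exact this
  -- the range of the orbit is totally bounded
  have htb : TotallyBounded (Set.range x) := by
    rw [Metric.totallyBounded_iff]
    intro ε hε
    obtain ⟨K, hK⟩ := hinf (ε / 3) (by linarith)
    obtain ⟨s, hsfin, hAs⟩ := Metric.totallyBounded_iff.1 hAcpt.totallyBounded (ε / 3)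
      (by linarith)
    refine ⟨s ∪ (fun k => x k) '' (Set.Iio K), hsfin.union ((Set.finite_Iio K).image _), ?_⟩
    rintro - ⟨k, rfl⟩
    rcases lt_or_ge k K with hk | hk
    · exact Set.mem_biUnion (Set.mem_union_right _ ⟨k, hk, rfl⟩)
        (Metric.mem_ball_self hε)
    · have h1 : infDist (x k) A < ε / 3 := hK k hk
      obtain ⟨a, haA, ha⟩ := (Metric.infDist_lt_iff hAne).1 h1
      obtain ⟨c, hcs, hc⟩ := Set.mem_iUnion₂.1 (hAs haA)
      refine Set.mem_biUnion (Set.mem_union_left _ hcs) ?_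
      rw [Metric.mem_ball] at hc ⊢
      calc dist (x k) c ≤ dist (x k) a + dist a c := dist_triangle _ _ _
        _ < ε / 3 + ε / 3 := add_lt_add ha hc
        _ < ε := by linarith
  -- so the closure of the orbit is compact
  have hTcpt : IsCompact (closure (Set.range x)) :=
    TotallyBounded.isCompact_of_isClosed htb.closure isClosed_closure
  -- now take y ∈ Cinf
  intro y hy
  have hy' : ∀ K : ℕ, y ∈ tailSet f σ x₀ K := fun K => Set.mem_iInter.1 hy K
  -- choose k n ≥ n + 1 with dist (x (k n)) y < 1 / (n + 1)
  have hchoice : ∀ n : ℕ, ∃ k : ℕ, n + 1 ≤ k ∧ dist (x k) y < 1 / (n + 1) := by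
    intro n
    have := hy' (n + 1)
    rw [tailSet, Metric.mem_closure_iff] at this
    obtain ⟨z, ⟨k, hk, rfl⟩, hz⟩ := this (1 / (n + 1)) (by positivity)
    exact ⟨k, hk, by rwa [dist_comm]⟩
  choose k hk1 hk2 using hchoice
  -- x (k n) → y
  have hxk : Tendsto (fun n => x (k n)) atTop (nhds y) := by
    rw [tendsto_iff_dist_tendsto_zero]
    refine squeeze_zero (fun n => dist_nonneg) (fun n => (hk2 n).le) ?_
    exact tendsto_one_div_add_atTop_nhds_zero_nat
  -- pigeonhole: some symbol τ appears frequently at position (k n - 1)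
  have hpig : ∃ τ : Λ, ∃ᶠ n in atTop, σ (k n - 1) = τ := by
    by_contra h
    push_neg at h
    have : ∀ᶠ n in atTop, ∀ τ : Λ, ¬ σ (k n - 1) = τ := eventually_all.2 h
    obtain ⟨n, hn⟩ := this.exists
    exact hn (σ (k n - 1)) rfl
  obtain ⟨τ, hτ⟩ := hpig
  obtain ⟨φ, hφmono, hφ⟩ := Filter.extraction_of_frequently_atTop hτ
  -- the predecessors z n = x (k (φ n) - 1) live in a compact set
  set z : ℕ → X := fun n => x (k (φ n) - 1) with hz
  have hzmem : ∀ n, z n ∈ closure (Set.range x) := fun n =>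
    subset_closure (Set.mem_range_self _)
  obtain ⟨w, hwmem, ψ, hψmono, hψtend⟩ := hTcpt.tendsto_subseq hzmem
  -- w ∈ Cinf
  have hidx : ∀ n : ℕ, n ≤ k (φ (ψ n)) - 1 := by
    intro n
    have h1 : n ≤ φ (ψ n) := le_trans (hψmono.id_le n) (hφmono.id_le (ψ n))
    have h2 : φ (ψ n) + 1 ≤ k (φ (ψ n)) := hk1 _
    omega
  have hwCinf : w ∈ Cinf f σ x₀ := by
    rw [Cinf, Set.mem_iInter]
    intro K
    refine isClosed_closure.mem_of_tendsto hψtend ?_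
    filter_upwards [eventually_ge_atTop K] with n hn
    exact subset_closure ⟨k (φ (ψ n)) - 1, le_trans hn (hidx n), rfl⟩
  -- along the subsequence, x (k (φ (ψ n))) = f τ (z (ψ n)) → f τ w
  have hstep : ∀ n, x (k (φ (ψ n))) = f τ (z (ψ n)) := by
    intro n
    have h1 : 1 ≤ k (φ (ψ n)) := le_trans (Nat.le_add_left 1 _) (hk1 _)
    have h2 : k (φ (ψ n)) = (k (φ (ψ n)) - 1) + 1 := by omega
    rw [hz]
    conv_lhs => rw [h2]
    simp only [hx, orbit]
    rw [hφ (ψ n)]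
  have hlim1 : Tendsto (fun n => x (k (φ (ψ n)))) atTop (nhds y) :=
    hxk.comp ((hφmono.comp hψmono).tendsto_atTop)
  have hlim2 : Tendsto (fun n => x (k (φ (ψ n)))) atTop (nhds (f τ w)) := by
    have : Tendsto (fun n => f τ (z (ψ n))) atTop (nhds (f τ w)) :=
      ((hf τ).continuousAt.tendsto).comp hψtend
    exact this.congr fun n => (hstep n).symm
  have : y = f τ w := tendsto_nhds_unique hlim1 hlim2
  exact Set.mem_iUnion.2 ⟨τ, w, hwCinf, this.symm⟩
end

section
/- Let A be an attractor of the IFS F with basin B(A), let x_0 ∈ B(A) and let σ ∈ Σ^∞ be disjunctive. Then the set C_∞(x_0,σ) intersects every fibre of A; that is, A_ρ ∩ C_∞(x_0,σ) ≠ ∅ for every ρ ∈ Σ^∞. -/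
set_option linter.unusedSectionVars false


open Metric Filter Set MeasureTheory

variable {X : Type*} [MetricSpace X] [CompleteSpace X]
variable {Λ : Type*} [Fintype Λ] [Nonempty Λ]

section Aux

lemma hutch_isCompact (f : Λ → X → X) (hf : ∀ a : Λ, Continuous (f a)) {B : Set X}
    (hB : IsCompact B) : IsCompact (Hutch f B) :=
  isCompact_iUnion fun a => hB.image (hf a)

lemma hutch_nonempty (f : Λ → X → X) {B : Set X} (hB : B.Nonempty) :
    (Hutch f B).Nonempty := by
  obtain ⟨x, hx⟩ := hB
  exact ⟨f (Classical.arbitrary Λ) x, mem_iUnion.2 ⟨_, mem_image_of_mem _ hx⟩⟩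

lemma hutch_iter (f : Λ → X → X) (hf : ∀ a : Λ, Continuous (f a)) {B : Set X}
    (hB : IsCompact B) (hBne : B.Nonempty) (k : ℕ) :
    IsCompact ((Hutch f)^[k] B) ∧ ((Hutch f)^[k] B).Nonempty := by
  induction k with
  | zero => exact ⟨hB, hBne⟩
  | succ k ih =>
    rw [Function.iterate_succ_apply']
    exact ⟨hutch_isCompact f hf ih.1, hutch_nonempty f ih.2⟩

lemma orbit_mem_iter (f : Λ → X → X) (σ : ℕ → Λ) (x₀ : X) :
    ∀ k, orbit f σ x₀ k ∈ (Hutch f)^[k] ({x₀} : Set X) := by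
  intro k
  induction k with
  | zero => exact rfl
  | succ k ih =>
    rw [Function.iterate_succ_apply']
    exact mem_iUnion.2 ⟨σ k, mem_image_of_mem _ ih⟩

lemma image_subset_attractor (f : Λ → X → X) (hf : ∀ a : Λ, Continuous (f a))
    {A U : Set X} (hAne : A.Nonempty) (hAc : IsCompact A) (hAU : A ⊆ U)
    (hatt : Attracts f A U) (a : Λ) : f a '' A ⊆ A := by
  rintro _ ⟨x, hx, rfl⟩
  have hiter := fun k => hutch_iter f hf hAc hAne k
  have htd := hatt A hAne hAc hAU
  have hne : ∀ k, EMetric.hausdorffEdist ((Hutch f)^[k] A) A ≠ ⊤ := fun k =>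
    Metric.hausdorffEdist_ne_top_of_nonempty_of_bounded (hiter k).2 hAne
      (hiter k).1.isBounded hAc.isBounded
  choose y hy hyd using fun k => (hiter k).1.exists_infDist_eq_dist (hiter k).2 x
  have h1 : Tendsto (fun k => dist x (y k)) atTop (nhds 0) := by
    refine squeeze_zero (fun k => dist_nonneg) (fun k => ?_) htd
    rw [← hyd k]
    calc infDist x ((Hutch f)^[k] A)
        ≤ hausdorffDist A ((Hutch f)^[k] A) :=
          infDist_le_hausdorffDist_of_mem hx
            (by rw [EMetric.hausdorffEdist_comm]; exact hne k)
      _ = hausdorffDist ((Hutch f)^[k] A) A := hausdorffDist_comm ..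
  have hyx : Tendsto y atTop (nhds x) :=
    tendsto_iff_dist_tendsto_zero.2 (by simpa [dist_comm] using h1)
  have h2 : Tendsto (fun k => infDist (f a (y k)) A) atTop (nhds (infDist (f a x) A)) :=
    (((continuous_infDist_pt A).comp (hf a)).continuousAt.tendsto).comp hyx
  have h3 : Tendsto (fun k => infDist (f a (y k)) A) atTop (nhds 0) := by
    refine squeeze_zero (fun k => infDist_nonneg) (fun k => ?_)
      (htd.comp (tendsto_add_atTop_nat 1))
    have hm : f a (y k) ∈ (Hutch f)^[k+1] A := by
      rw [Function.iterate_succ_apply']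
      exact mem_iUnion.2 ⟨a, mem_image_of_mem _ (hy k)⟩
    exact infDist_le_hausdorffDist_of_mem hm (hne (k+1))
  exact (hAc.isClosed.mem_iff_infDist_zero hAne).2 (tendsto_nhds_unique h2 h3)

lemma orbit_word (f : Λ → X → X) (σ ρ : ℕ → Λ) (x₀ : X) :
    ∀ (m j : ℕ), (∀ l, l ≤ m → σ (j + l) = ρ (m - l)) →
      orbit f σ x₀ (j + (m + 1)) = fibreComp f ρ (m + 1) (orbit f σ x₀ j) := by
  intro m
  induction m with
  | zero =>
    intro j h
    have h0 : σ j = ρ 0 := by simpa using h 0 le_rfl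
    show f (σ j) (orbit f σ x₀ j) = (fibreComp f ρ 0 ∘ f (ρ 0)) (orbit f σ x₀ j)
    simp [fibreComp, h0]
  | succ m ih =>
    intro j h
    have h0 : σ j = ρ (m+1) := by simpa using h 0 (Nat.zero_le _)
    have h' : ∀ l, l ≤ m → σ ((j+1) + l) = ρ (m - l) := by
      intro l hl
      have := h (l+1) (by omega)
      rw [show j + (l+1) = (j+1)+l by omega] at this
      rw [this]
      congr 1
      omega
    have he := ih (j+1) h'
    have e : j + (m+1+1) = (j+1) + (m+1) := by omega
    rw [e, he]
    show fibreComp f ρ (m+1) (f (σ j) (orbit f σ x₀ j))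
        = (fibreComp f ρ (m+1) ∘ f (ρ (m+1))) (orbit f σ x₀ j)
    rw [h0]
    rfl

lemma disjunctive_large {σ : ℕ → Λ} (hσ : Disjunctive σ) (ρ : ℕ → Λ) (m N : ℕ) :
    ∃ j, N ≤ j ∧ ∀ l, l ≤ m → σ (j + l) = ρ (m - l) := by
  classical
  obtain ⟨j₀, hj₀⟩ := hσ (N + (m+1))
    (fun l => if l.1 < N then Classical.arbitrary Λ else ρ (m - (l.1 - N)))
  refine ⟨j₀ + N, Nat.le_add_left _ _, fun l hl => ?_⟩
  have hlt : N + l < N + (m+1) := by omega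
  have hthis := hj₀ ⟨N + l, hlt⟩
  simp only at hthis
  rw [show j₀ + N + l = j₀ + (N + l) by omega, hthis, if_neg (by omega)]
  congr 1
  omega

lemma fibreComp_continuous (f : Λ → X → X) (hf : ∀ a : Λ, Continuous (f a))
    (ρ : ℕ → Λ) (K : ℕ) : Continuous (fibreComp f ρ K) := by
  induction K with
  | zero => exact continuous_id
  | succ K ih => exact ih.comp (hf (ρ K))

end Aux

/-- Theorem 1: for disjunctive `σ`, the set `C_∞(x₀,σ)` intersects
every fibre `A_ρ` of the attractor `A`. -/
theorem chaosGame_Cinf_meets_every_fibre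
    (f : Λ → X → X) (hf : ∀ a : Λ, Continuous (f a))
    (A : Set X) (hA : IsAttractor f A)
    (x₀ : X) (hx₀ : x₀ ∈ basin f A)
    (σ : ℕ → Λ) (hσ : Disjunctive σ) (ρ : ℕ → Λ) :
    (fibre f A ρ ∩ Cinf f σ x₀).Nonempty := by
  classical
  obtain ⟨U, ⟨hUo, hAU, hatt⟩, hxU⟩ := hx₀
  obtain ⟨hAne, hAc, -⟩ := hA
  have himg : ∀ a : Λ, f a '' A ⊆ A := image_subset_attractor f hf hAne hAc hAU hatt
  have hfc : ∀ K, Continuous (fibreComp f ρ K) := fibreComp_continuous f hf ρ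
  have hiter := fun k =>
    hutch_iter f hf (isCompact_singleton (x := x₀)) (singleton_nonempty x₀) k
  have htd := hatt {x₀} (singleton_nonempty x₀) isCompact_singleton
    (singleton_subset_iff.2 hxU)
  have hD : Tendsto (fun k => infDist (orbit f σ x₀ k) A) atTop (nhds 0) :=
    squeeze_zero (fun k => infDist_nonneg) (fun k =>
      infDist_le_hausdorffDist_of_mem (orbit_mem_iter f σ x₀ k)
        (Metric.hausdorffEdist_ne_top_of_nonempty_of_bounded (hiter k).2 hAne
          (hiter k).1.isBounded hAc.isBounded)) htd
  set C : ℕ → Set X := fun m => fibreComp f ρ (m+1) '' A ∩ tailSet f σ x₀ m with hCdef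
  have hCc : ∀ m, IsCompact (C m) := fun m =>
    (hAc.image (hfc (m+1))).inter_right isClosed_closure
  have hmono : ∀ m, C (m+1) ⊆ C m := by
    intro m
    apply inter_subset_inter
    · have he : fibreComp f ρ (m+1+1) '' A = fibreComp f ρ (m+1) '' (f (ρ (m+1)) '' A) := by
        rw [← image_comp]
        rfl
      rw [he]
      exact image_mono (himg _)
    · exact closure_mono (fun y hy => by
        obtain ⟨k, hk, he⟩ := hy
        exact ⟨k, by omega, he⟩)
  have hCne : ∀ m, (C m).Nonempty := by
    intro m
    choose j hjN hjw using fun N => disjunctive_large hσ ρ m N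
    have hjt : Tendsto j atTop atTop := tendsto_atTop_mono hjN tendsto_id
    have h1 : Tendsto (fun N => infDist (orbit f σ x₀ (j N)) A) atTop (nhds 0) :=
      hD.comp hjt
    choose a ha had using fun N => hAc.exists_infDist_eq_dist hAne (orbit f σ x₀ (j N))
    obtain ⟨b, hbA, φ, hφ, hbt⟩ := hAc.tendsto_subseq ha
    have h2 : Tendsto (fun i => orbit f σ x₀ (j (φ i))) atTop (nhds b) := by
      rw [tendsto_iff_dist_tendsto_zero]
      refine squeeze_zero (fun i => dist_nonneg)
        (fun i => dist_triangle _ (a (φ i)) b) ?_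
      have hA1 : Tendsto (fun i => dist (orbit f σ x₀ (j (φ i))) (a (φ i))) atTop (nhds 0) := by
        simp only [← had]
        exact h1.comp hφ.tendsto_atTop
      have hA2 : Tendsto (fun i => dist (a (φ i)) b) atTop (nhds 0) :=
        tendsto_iff_dist_tendsto_zero.1 hbt
      simpa using hA1.add hA2
    have h3 : Tendsto (fun i => fibreComp f ρ (m+1) (orbit f σ x₀ (j (φ i)))) atTop
        (nhds (fibreComp f ρ (m+1) b)) :=
      ((hfc (m+1)).continuousAt.tendsto).comp h2
    refine ⟨fibreComp f ρ (m+1) b, mem_image_of_mem _ hbA, ?_⟩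
    apply mem_closure_of_tendsto h3
    filter_upwards with i
    exact ⟨j (φ i) + (m+1), by omega, orbit_word f σ ρ x₀ m (j (φ i)) (hjw (φ i))⟩
  obtain ⟨x, hx⟩ := IsCompact.nonempty_iInter_of_sequence_nonempty_isCompact_isClosed C
    hmono hCne (hCc 0) (fun m => (hCc m).isClosed)
  rw [mem_iInter] at hx
  exact ⟨x, mem_iInter.2 fun K => (hx K).1, mem_iInter.2 fun K => (hx K).2⟩
end

section
/- Let Σ be a finite nonempty alphabet, let τ = (τ_1, …, τ_m) ∈ Σ^m with m ≥ 1 and let p ≥ 1. Then the set Ψ(τ,p) = {(σ_i)_{i≥1} ∈ Σ^∞ : there is no k ≥ p with τ_l = σ_{(k-1)+l} for all l = 1, …, m}, consisting of sequences that do not contain the word τ from the p-th position onwards, is a Borel subset of the Cantor space (Σ^∞, ϱ) and is porous with respect to the Baire metric ϱ. -/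
open Metric Filter Set MeasureTheory


open Classical in
/-- The Baire metric `ϱ(x,y) = 2^{-min{i ≥ 1 : x_i ≠ y_i}}` on the Cantor space of
(0-indexed) sequences: here `min` of the 1-indexed paper corresponds to `sInf + 1`. -/
noncomputable def baireDist {Γ : Type*} (x y : ℕ → Γ) : ℝ :=
  if x = y then 0 else (2 : ℝ) ^ (-((sInf {i : ℕ | x i ≠ y i} : ℕ) : ℤ) - 1)

/-- `Ψ` is porous with respect to the distance function `ρ`. -/
def PorousWith {M : Type*} (ρ : M → M → ℝ) (Ψ : Set M) : Prop :=
  ∃ lam : ℝ, 0 < lam ∧ lam < 1 ∧ ∃ r₀ : ℝ, 0 < r₀ ∧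
    ∀ ψ ∈ Ψ, ∀ r : ℝ, 0 < r → r < r₀ →
      ∃ υ : M, {x : M | ρ υ x < lam * r} ⊆ {x : M | ρ ψ x < r} \ Ψ

/-- `Ψ` is σ-porous with respect to `ρ`: a countable union of porous sets. -/
def SigmaPorousWith {M : Type*} (ρ : M → M → ℝ) (Ψ : Set M) : Prop :=
  ∃ c : ℕ → Set M, (∀ n : ℕ, PorousWith ρ (c n)) ∧ Ψ = ⋃ n : ℕ, c n

lemma baireDist_lt_of_agree {Γ : Type*} {x y : ℕ → Γ} {N : ℕ}
    (h : ∀ i ≤ N, x i = y i) : baireDist x y < (2 : ℝ) ^ (-(N : ℤ) - 1) := by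
  unfold baireDist
  split_ifs with hxy
  · positivity
  · have hne : {i : ℕ | x i ≠ y i}.Nonempty := by
      by_contra hc
      exact hxy (funext fun i => by_contra fun hi => hc ⟨i, hi⟩)
    have hmem := Nat.sInf_mem hne
    have hgt : N < sInf {i : ℕ | x i ≠ y i} := by
      by_contra hle
      push_neg at hle
      exact hmem (h _ hle)
    apply zpow_lt_zpow_right₀ (by norm_num : (1:ℝ) < 2)
    omega

lemma agree_of_baireDist_lt {Γ : Type*} {x y : ℕ → Γ} {N : ℕ}
    (h : baireDist x y < (2 : ℝ) ^ (-(N : ℤ) - 1)) : ∀ i ≤ N, x i = y i := by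
  intro i hi
  unfold baireDist at h
  split_ifs at h with hxy
  · exact congrFun hxy i
  · have := (zpow_lt_zpow_iff_right₀ (by norm_num : (1:ℝ) < 2)).mp h
    have hlt : i < sInf {i : ℕ | x i ≠ y i} := by omega
    have := Nat.notMem_of_lt_sInf hlt
    simpa using this

/-- Lemma "nontaustrings": for a word `τ ∈ Σ^m` (`m ≥ 1`) and `p ≥ 1`,
the set `Ψ(τ,p)` of sequences not containing `τ` from the `p`-th position onwards is a
Borel and porous subset of the Cantor space with the Baire metric. -/
theorem avoidingSet_borel_and_porous
    {Γ : Type*} [Fintype Γ] [Nonempty Γ] [TopologicalSpace Γ] [DiscreteTopology Γ]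
    (m : ℕ) (hm : 1 ≤ m) (τ : Fin m → Γ) (p : ℕ) (hp : 1 ≤ p) :
    MeasurableSet[borel (ℕ → Γ)]
        {x : ℕ → Γ | ¬ ∃ k : ℕ, p ≤ k ∧ ∀ l : Fin m, x (k - 1 + l.1) = τ l} ∧
    PorousWith baireDist
        {x : ℕ → Γ | ¬ ∃ k : ℕ, p ≤ k ∧ ∀ l : Fin m, x (k - 1 + l.1) = τ l} := by
  classical
  constructor
  · letI : MeasurableSpace (ℕ → Γ) := borel _
    haveI : BorelSpace (ℕ → Γ) := ⟨rfl⟩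
    have hset : {x : ℕ → Γ | ¬ ∃ k : ℕ, p ≤ k ∧ ∀ l : Fin m, x (k - 1 + l.1) = τ l}
        = (⋃ k : ℕ, ⋃ _ : p ≤ k, ⋂ l : Fin m, {x : ℕ → Γ | x (k - 1 + l.1) = τ l})ᶜ := by
      ext x; simp
    rw [hset]
    refine MeasurableSet.compl ?_
    refine MeasurableSet.iUnion fun k => MeasurableSet.iUnion fun _ => ?_
    refine MeasurableSet.iInter fun l => ?_
    have hc : Continuous fun x : ℕ → Γ => x (k - 1 + l.1) := continuous_apply _
    exact ((isOpen_discrete {τ l}).preimage hc).measurableSet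
  · refine ⟨(2 : ℝ) ^ (-(m : ℤ) - 2), by positivity, ?_, (2 : ℝ) ^ (-(p : ℤ)), by positivity,
      ?_⟩
    · apply zpow_lt_one_of_neg₀ (by norm_num : (1:ℝ) < 2)
      omega
    intro ψ hψ r hr hrr₀
    -- choose `n` with `2 ^ (-(n+1)) ≤ r < 2 ^ (-n)` and `p ≤ n`
    have hex : ∃ N : ℕ, (2 : ℝ) ^ (-(N : ℤ)) ≤ r := by
      obtain ⟨N, hN⟩ := exists_pow_lt_of_lt_one hr (by norm_num : (1/2 : ℝ) < 1)
      refine ⟨N, le_of_lt ?_⟩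
      have heq : ((1:ℝ)/2) ^ N = (2:ℝ) ^ (-(N:ℤ)) := by
        rw [zpow_neg, zpow_natCast]
        simp [one_div, inv_pow]
      linarith [heq ▸ hN]
    set N₀ := Nat.find hex with hN₀def
    have hN₀ : (2 : ℝ) ^ (-(N₀ : ℤ)) ≤ r := Nat.find_spec hex
    have hpN₀ : p < N₀ := by
      by_contra hc
      push_neg at hc
      have hle : (2 : ℝ) ^ (-(p : ℤ)) ≤ (2 : ℝ) ^ (-(N₀ : ℤ)) :=
        zpow_le_zpow_right₀ (by norm_num : (1:ℝ) ≤ 2) (by omega)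
      linarith
    set n := N₀ - 1 with hndef
    have hN₀n : N₀ = n + 1 := by omega
    have hpn : p ≤ n := by omega
    have h1 : (2 : ℝ) ^ (-((n + 1 : ℕ) : ℤ)) ≤ r := hN₀n ▸ hN₀
    have h2 : r < (2 : ℝ) ^ (-(n : ℤ)) := by
      have := Nat.find_min hex (m := n) (by omega)
      push_neg at this
      exact this
    -- the witness point
    refine ⟨fun i => if h : n + 1 ≤ i ∧ i ≤ n + m then τ ⟨i - (n + 1), by omega⟩ else ψ i, ?_⟩
    intro x hx
    simp only [mem_setOf_eq] at hx
    have hlt : baireDist (fun i => if h : n + 1 ≤ i ∧ i ≤ n + m then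
        τ ⟨i - (n + 1), by omega⟩ else ψ i) x < (2 : ℝ) ^ (-((n + m + 1 : ℕ) : ℤ) - 1) := by
      calc _ < (2 : ℝ) ^ (-(m : ℤ) - 2) * r := hx
        _ < (2 : ℝ) ^ (-(m : ℤ) - 2) * (2 : ℝ) ^ (-(n : ℤ)) := by
            have : (0:ℝ) < (2 : ℝ) ^ (-(m : ℤ) - 2) := by positivity
            exact mul_lt_mul_of_pos_left h2 this
        _ = (2 : ℝ) ^ (-((n + m + 1 : ℕ) : ℤ) - 1) := by
            rw [← zpow_add₀ (by norm_num : (2:ℝ) ≠ 0)]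
            congr 1
            push_cast; ring
    have hag := agree_of_baireDist_lt hlt
    constructor
    · -- `baireDist ψ x < r`
      have hagψ : ∀ i ≤ n, ψ i = x i := by
        intro i hi
        have h1' : (if h : n + 1 ≤ i ∧ i ≤ n + m then
            τ ⟨i - (n + 1), by omega⟩ else ψ i) = ψ i := dif_neg (by omega)
        rw [← h1']
        exact hag i (by omega)
      have := baireDist_lt_of_agree hagψ
      simp only [mem_setOf_eq]
      calc baireDist ψ x < (2 : ℝ) ^ (-(n : ℤ) - 1) := this
        _ = (2 : ℝ) ^ (-((n + 1 : ℕ) : ℤ)) := by congr 1; push_cast; ring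
        _ ≤ r := h1
    · -- `x ∉ Ψ`
      simp only [mem_setOf_eq, not_not]
      refine ⟨n + 2, by omega, fun l => ?_⟩
      have hl := l.isLt
      have hmem : n + 2 - 1 + l.1 ≤ n + m + 1 := by omega
      have := (hag (n + 2 - 1 + l.1) hmem).symm
      rw [this]
      have hcond : n + 1 ≤ n + 2 - 1 + l.1 ∧ n + 2 - 1 + l.1 ≤ n + m := by omega
      rw [dif_pos hcond]
      congr 1
      ext
      simp only [Fin.val_mk]
      omega
end

section
/- Let (Z_n)_{n≥1} be a homogeneous Markov chain with values in a finite alphabet Σ whose initial distribution is strictly positive (Pr(Z_1 = σ) > 0 for every σ ∈ Σ). Then (Z_n)_{n≥1} is a disjunctive process if and only if the transition matrix has all entries positive, i.e. Pr(Z_{n+1} = τ | Z_n = σ) > 0 for all σ, τ ∈ Σ. -/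
open Metric Filter Set MeasureTheory

set_option linter.unusedSectionVars false
set_option linter.unusedVariables false

section Aux

variable {Γ : Type*} [Fintype Γ] [Nonempty Γ] [MeasurableSpace Γ] [MeasurableSingletonClass Γ]
variable {S : Type*} [MeasurableSpace S] (Pr : Measure S) (Z : ℕ → S → Γ)

/-- cylinder set -/
def mcCyl (N : ℕ) (w : ℕ → Γ) : Set S := {s | ∀ i < N, Z i s = w i}

/-- extend a finite word to ℕ → Γ -/
noncomputable def mcExt (N : ℕ) (v : Fin N → Γ) (i : ℕ) : Γ :=
  if h : i < N then v ⟨i, h⟩ else Classical.arbitrary Γ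

lemma mcExt_lt {N : ℕ} (v : Fin N → Γ) {i : ℕ} (h : i < N) : mcExt N v i = v ⟨i, h⟩ :=
  dif_pos h

lemma mcCyl_meas (hZ : ∀ n, Measurable (Z n)) (N : ℕ) (w : ℕ → Γ) :
    MeasurableSet (mcCyl Z N w) := by
  have : mcCyl Z N w = ⋂ i ∈ Finset.range N, (Z i) ⁻¹' {w i} := by
    ext s; simp [mcCyl]
  rw [this]
  exact Finset.measurableSet_biInter _ fun i _ => (hZ i) (measurableSet_singleton _)

lemma mcCyl_congr {N : ℕ} {w w' : ℕ → Γ} (h : ∀ i < N, w i = w' i) :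
    mcCyl Z N w = mcCyl (S := S) Z N w' := by
  ext s
  constructor <;> intro hs i hi
  · rw [← h i hi]; exact hs i hi
  · rw [h i hi]; exact hs i hi

variable [IsProbabilityMeasure Pr]

lemma mcStep (P : Γ → Γ → ENNReal)
    (hmarkov : ∀ (n : ℕ) (w : Fin (n + 1) → Γ) (t : Γ),
      Pr {s : S | (∀ i : Fin (n + 1), Z i.1 s = w i) ∧ Z (n + 1) s = t}
        = P (w (Fin.last n)) t * Pr {s : S | ∀ i : Fin (n + 1), Z i.1 s = w i})
    (w : ℕ → Γ) (n : ℕ) :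
    Pr (mcCyl Z (n + 2) w) = P (w n) (w (n + 1)) * Pr (mcCyl Z (n + 1) w) := by
  have h := hmarkov n (fun i => w i.1) (w (n + 1))
  have e1 : {s : S | (∀ i : Fin (n + 1), Z i.1 s = w i.1) ∧ Z (n + 1) s = w (n + 1)}
      = mcCyl Z (n + 2) w := by
    ext s
    simp only [mcCyl, Set.mem_setOf_eq]
    constructor
    · rintro ⟨h1, h2⟩ i hi
      rcases Nat.lt_succ_iff_lt_or_eq.mp hi with hi' | hi'
      · exact h1 ⟨i, hi'⟩
      · subst hi'; exact h2
    · intro h1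
      exact ⟨fun i => h1 i.1 (by omega), h1 (n + 1) (by omega)⟩
  have e2 : {s : S | ∀ i : Fin (n + 1), Z i.1 s = w i.1} = mcCyl Z (n + 1) w := by
    ext s
    simp only [mcCyl, Set.mem_setOf_eq]
    exact ⟨fun h1 i hi => h1 ⟨i, hi⟩, fun h1 i => h1 i.1 i.2⟩
  rw [e1, e2] at h
  simpa using h

lemma mcExtend (P : Γ → Γ → ENNReal)
    (hmarkov : ∀ (n : ℕ) (w : Fin (n + 1) → Γ) (t : Γ),
      Pr {s : S | (∀ i : Fin (n + 1), Z i.1 s = w i) ∧ Z (n + 1) s = t}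
        = P (w (Fin.last n)) t * Pr {s : S | ∀ i : Fin (n + 1), Z i.1 s = w i})
    (w : ℕ → Γ) (n j : ℕ) :
    Pr (mcCyl Z (n + 1 + j) w)
      = (∏ i ∈ Finset.range j, P (w (n + i)) (w (n + i + 1))) * Pr (mcCyl Z (n + 1) w) := by
  induction j with
  | zero => simp
  | succ j ih =>
      have e : n + 1 + (j + 1) = (n + j) + 2 := by ring
      rw [e, mcStep Pr Z P hmarkov w (n + j), show (n + j) + 1 = n + 1 + j by ring,
        ih, Finset.prod_range_succ]
      ac_rfl

lemma mcPartition (hZ : ∀ n, Measurable (Z n)) (N : ℕ) (A : Set S) (hA : MeasurableSet A) :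
    Pr A = ∑ v : Fin N → Γ, Pr (A ∩ mcCyl Z N (mcExt N v)) := by
  classical
  have hcover : A = ⋃ v : Fin N → Γ, A ∩ mcCyl Z N (mcExt N v) := by
    ext s
    simp only [Set.mem_iUnion, Set.mem_inter_iff]
    constructor
    · intro hs
      refine ⟨fun i => Z i.1 s, hs, fun i hi => ?_⟩
      rw [mcExt_lt _ hi]
    · rintro ⟨v, hs, -⟩; exact hs
  have hdisj : Pairwise (Function.onFun Disjoint
      fun v : Fin N → Γ => A ∩ mcCyl Z N (mcExt N v)) := by
    intro v v' hne
    simp only [Function.onFun, Set.disjoint_left]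
    rintro s ⟨-, hs⟩ ⟨-, hs'⟩
    apply hne
    funext i
    have h1 := hs i.1 i.2
    have h2 := hs' i.1 i.2
    rw [mcExt_lt _ i.2] at h1
    rw [mcExt_lt _ i.2] at h2
    rw [← h1, ← h2]
  have := measure_iUnion (μ := Pr) hdisj
    (fun v => hA.inter (mcCyl_meas Z hZ N (mcExt N v)))
  rw [← hcover] at this
  rw [this, tsum_fintype]

end Aux

/-- a homogeneous Markov chain with values in a finite alphabet and
strictly positive initial distribution is a disjunctive process if and only if its
transition matrix has all entries positive. The Markov property (conditioning on the
whole history) is expressed via joint distributions. -/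
theorem markov_chain_disjunctive_iff_positive_transition
    {Γ : Type*} [Fintype Γ] [Nonempty Γ] [MeasurableSpace Γ] [MeasurableSingletonClass Γ]
    {S : Type*} [MeasurableSpace S] (Pr : Measure S) [IsProbabilityMeasure Pr]
    (Z : ℕ → S → Γ) (hZ : ∀ n : ℕ, Measurable (Z n))
    (P : Γ → Γ → ENNReal) (hstoch : ∀ a : Γ, ∑ b : Γ, P a b = 1)
    (hmarkov : ∀ (n : ℕ) (w : Fin (n + 1) → Γ) (t : Γ),
      Pr {s : S | (∀ i : Fin (n + 1), Z i.1 s = w i) ∧ Z (n + 1) s = t}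
        = P (w (Fin.last n)) t * Pr {s : S | ∀ i : Fin (n + 1), Z i.1 s = w i})
    (hinit : ∀ a : Γ, 0 < Pr {s : S | Z 0 s = a}) :
    (∀ (m : ℕ) (τ : Fin m → Γ),
        Pr {s : S | ∃ n : ℕ, ∀ l : Fin m, Z (n + l.1) s = τ l} = 1)
      ↔ ∀ a b : Γ, 0 < P a b := by
  classical
  constructor
  · -- disjunctive → all transitions positive
    intro hdisj a b
    by_contra hab
    have hab0 : P a b = 0 := by simpa [pos_iff_ne_zero] using hab
    have hT := hdisj 2 ![a, b]
    have hA0 : ∀ n : ℕ, Pr {s : S | Z n s = a ∧ Z (n + 1) s = b} = 0 := by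
      intro n
      have hAmeas : MeasurableSet {s : S | Z n s = a ∧ Z (n + 1) s = b} := by
        have he : {s : S | Z n s = a ∧ Z (n + 1) s = b}
            = (Z n ⁻¹' {a}) ∩ (Z (n + 1) ⁻¹' {b}) := by
          ext s; simp [Set.mem_inter_iff]
        rw [he]
        exact ((hZ n) (measurableSet_singleton _)).inter
          ((hZ (n + 1)) (measurableSet_singleton _))
      rw [mcPartition Pr Z hZ (n + 1) _ hAmeas]
      apply Finset.sum_eq_zero
      intro v _
      by_cases hv : mcExt (n + 1) v n = a
      · set u : ℕ → Γ := fun i => if i = n + 1 then b else mcExt (n + 1) v i with hu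
        have he : {s : S | Z n s = a ∧ Z (n + 1) s = b} ∩ mcCyl Z (n + 1) (mcExt (n + 1) v)
            = mcCyl Z (n + 2) u := by
          ext s
          simp only [Set.mem_inter_iff, Set.mem_setOf_eq, mcCyl]
          constructor
          · rintro ⟨⟨h1, h2⟩, h3⟩ i hi
            rcases Nat.lt_succ_iff_lt_or_eq.mp hi with hi' | hi'
            · rw [hu]; simp only [if_neg (by omega : ¬ i = n + 1)]
              exact h3 i hi'
            · subst hi'; rw [hu]; simpa using h2
          · intro h1
            refine ⟨⟨?_, ?_⟩, ?_⟩
            · have h4 := h1 n (by omega)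
              rw [hu] at h4
              simp only [if_neg (by omega : ¬ n = n + 1)] at h4
              rw [h4, hv]
            · have h4 := h1 (n + 1) (by omega)
              rw [hu] at h4; simpa using h4
            · intro i hi
              have h4 := h1 i (by omega)
              rw [hu] at h4
              simpa only [if_neg (by omega : ¬ i = n + 1)] using h4
        rw [he, mcStep Pr Z P hmarkov u n]
        have hun : u n = a := by rw [hu]; simp only [if_neg (by omega : ¬ n = n + 1)]; exact hv
        have hun' : u (n + 1) = b := by rw [hu]; simp
        rw [hun, hun', hab0, zero_mul]
      · have he : {s : S | Z n s = a ∧ Z (n + 1) s = b} ∩ mcCyl Z (n + 1) (mcExt (n + 1) v)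
            = ∅ := by
          ext s
          simp only [Set.mem_inter_iff, Set.mem_setOf_eq, mcCyl, Set.mem_empty_iff_false,
            iff_false, not_and]
          rintro ⟨h1, h2⟩ h3
          exact hv (by rw [← h3 n (by omega), h1])
        rw [he]; simp
    have hT0 : Pr {s : S | ∃ n : ℕ, ∀ l : Fin 2, Z (n + l.1) s = ![a, b] l} = 0 := by
      refine measure_mono_null ?_ (measure_iUnion_null hA0)
      rintro s ⟨n, hn⟩
      refine Set.mem_iUnion.mpr ⟨n, ?_, ?_⟩
      · simpa using hn 0
      · simpa using hn 1
    rw [hT] at hT0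
    exact one_ne_zero hT0
  · -- all transitions positive → disjunctive
    intro hp m τ
    rcases Nat.eq_zero_or_pos m with hm | hm
    · subst hm
      have he : {s : S | ∃ n : ℕ, ∀ l : Fin 0, Z (n + l.1) s = τ l} = Set.univ := by
        ext s
        simp only [Set.mem_setOf_eq, Set.mem_univ, iff_true]
        exact ⟨0, fun l => l.elim0⟩
      rw [he, measure_univ]
    obtain ⟨ε, hε0, hεle⟩ : ∃ ε : ENNReal, 0 < ε ∧ ∀ a b, ε ≤ P a b := by
      refine ⟨(Finset.univ : Finset (Γ × Γ)).inf' Finset.univ_nonempty (fun p => P p.1 p.2),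
        ?_, ?_⟩
      · rw [Finset.lt_inf'_iff]
        exact fun p _ => hp p.1 p.2
      · intro a b
        exact Finset.inf'_le _ (Finset.mem_univ (a, b))
    have hε1 : ε ≤ 1 := by
      refine le_trans (hεle (Classical.arbitrary Γ) (Classical.arbitrary Γ)) ?_
      calc P (Classical.arbitrary Γ) (Classical.arbitrary Γ)
          ≤ ∑ c, P (Classical.arbitrary Γ) c :=
            Finset.single_le_sum (fun _ _ => zero_le) (Finset.mem_univ _)
        _ = 1 := hstoch _
    set δ : ENNReal := ε ^ m with hδ
    have hδ0 : δ ≠ 0 := pow_ne_zero m hε0.ne'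
    have hδ1 : δ ≤ 1 := pow_le_one' hε1 m
    set t : ℕ → Γ := fun i => if h : i < m then τ ⟨i, h⟩ else Classical.arbitrary Γ with ht
    set B : ℕ → Set S := fun k => {s | ∀ l < m, Z (k * m + l) s = t l} with hB
    have hBmeas : ∀ k, MeasurableSet (B k) := by
      intro k
      have he : B k = ⋂ l ∈ Finset.range m, (Z (k * m + l)) ⁻¹' {t l} := by
        ext s; simp [hB]
      rw [he]
      exact Finset.measurableSet_biInter _ fun l _ => (hZ _) (measurableSet_singleton _)
    set E : ℕ → Set S := fun K => ⋂ k ∈ Finset.range K, (B k)ᶜ with hE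
    have hEmeas : ∀ K, MeasurableSet (E K) := fun K =>
      Finset.measurableSet_biInter _ fun k _ => (hBmeas k).compl
    have hEmem : ∀ K s, s ∈ E K ↔ ∀ k < K, s ∉ B k := by
      intro K s; simp [hE]
    -- key estimate
    have hkey : ∀ K, Pr (E (K + 2)) ≤ (1 - δ) * Pr (E (K + 1)) := by
      intro K
      set N := (K + 1) * m with hN
      have hN0 : 0 < N := Nat.mul_pos (Nat.succ_pos K) hm
      have hdet : ∀ v : Fin N → Γ, mcCyl Z N (mcExt N v) ⊆ E (K + 1) ∨
          E (K + 1) ∩ mcCyl Z N (mcExt N v) = ∅ := by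
        intro v
        by_cases hx : ∃ s0, s0 ∈ E (K + 1) ∩ mcCyl Z N (mcExt N v)
        · left
          obtain ⟨s0, hs0E, hs0C⟩ := hx
          intro s hs
          rw [hEmem] at hs0E ⊢
          intro k hk hsB
          apply hs0E k hk
          intro l hl
          have hkl : k * m + l < N := by
            calc k * m + l < k * m + m := by omega
              _ = (k + 1) * m := by ring
              _ ≤ (K + 1) * m := Nat.mul_le_mul_right m (by omega)
          have e1 : Z (k * m + l) s = mcExt N v (k * m + l) := hs _ hkl
          have e2 : Z (k * m + l) s0 = mcExt N v (k * m + l) := hs0C _ hkl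
          rw [e2, ← e1]
          exact hsB l hl
        · right
          push_neg at hx
          exact Set.eq_empty_iff_forall_notMem.mpr hx
      have hblk : ∀ v : Fin N → Γ,
          δ * Pr (mcCyl Z N (mcExt N v)) ≤ Pr (mcCyl Z N (mcExt N v) ∩ B (K + 1)) := by
        intro v
        set u : ℕ → Γ := fun i => if h : i < N then mcExt N v i else t (i - N) with hu
        have e1 : mcCyl Z N (mcExt N v) ∩ B (K + 1) = mcCyl Z (N + m) u := by
          ext s
          simp only [mcCyl, hB, Set.mem_inter_iff, Set.mem_setOf_eq]
          constructor
          · rintro ⟨h1, h2⟩ i hi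
            by_cases hiN : i < N
            · rw [hu]; simp only [dif_pos hiN]; exact h1 i hiN
            · rw [hu]; simp only [dif_neg hiN]
              have hl : i - N < m := by omega
              have h3 := h2 (i - N) hl
              rwa [show (K + 1) * m + (i - N) = i by omega] at h3
          · intro h1
            constructor
            · intro i hi
              have h3 := h1 i (by omega)
              rw [hu] at h3
              simp only [dif_pos hi] at h3
              exact h3
            · intro l hl
              have h3 := h1 (N + l) (by omega)
              rw [hu] at h3
              simp only [dif_neg (by omega : ¬ N + l < N)] at h3
              rw [show N + l - N = l by omega] at h3
              rwa [show (K + 1) * m + l = N + l by omega]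
        have e2 : N + m = (N - 1) + 1 + m := by omega
        have hcalc := mcExtend Pr Z P hmarkov u (N - 1) m
        have e3 : mcCyl Z ((N - 1) + 1) u = mcCyl (S := S) Z N (mcExt N v) := by
          rw [show N - 1 + 1 = N by omega]
          apply mcCyl_congr
          intro i hi
          rw [hu]; simp only [dif_pos hi]
        rw [e1, e2, hcalc, e3]
        apply mul_le_mul_left
        calc δ = ∏ _i ∈ Finset.range m, ε := by
              rw [Finset.prod_const, Finset.card_range]
          _ ≤ ∏ i ∈ Finset.range m, P (u (N - 1 + i)) (u (N - 1 + i + 1)) :=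
              Finset.prod_le_prod' (fun i _ => hεle _ _)
      have hEB : δ * Pr (E (K + 1)) ≤ Pr (E (K + 1) ∩ B (K + 1)) := by
        have hmE := hEmeas (K + 1)
        rw [mcPartition Pr Z hZ N _ hmE,
            mcPartition Pr Z hZ N _ (hmE.inter (hBmeas (K + 1))), Finset.mul_sum]
        apply Finset.sum_le_sum
        intro v _
        rcases hdet v with hsub | hemp
        · have e4 : E (K + 1) ∩ mcCyl Z N (mcExt N v) = mcCyl Z N (mcExt N v) :=
            Set.inter_eq_self_of_subset_right hsub
          have e5 : E (K + 1) ∩ B (K + 1) ∩ mcCyl Z N (mcExt N v)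
              = mcCyl Z N (mcExt N v) ∩ B (K + 1) := by
            rw [Set.inter_right_comm, e4]
          rw [e4, e5]
          exact hblk v
        · rw [hemp]
          simp
      have hES : E (K + 2) = E (K + 1) \ (E (K + 1) ∩ B (K + 1)) := by
        ext s
        rw [Set.mem_diff, hEmem, hEmem]
        constructor
        · intro hs
          refine ⟨fun k hk => hs k (by omega), fun hc => ?_⟩
          exact hs (K + 1) (by omega) hc.2
        · rintro ⟨hs1, hs2⟩ k hk
          rcases Nat.lt_succ_iff_lt_or_eq.mp hk with hk' | hk'
          · exact hs1 k hk'
          · subst hk'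
            intro hBk
            exact hs2 ⟨(hEmem _ _).mpr hs1, hBk⟩
      rw [hES, measure_diff Set.inter_subset_left
        ((hEmeas _).inter (hBmeas _)).nullMeasurableSet (measure_ne_top Pr _)]
      calc Pr (E (K + 1)) - Pr (E (K + 1) ∩ B (K + 1))
          ≤ Pr (E (K + 1)) - δ * Pr (E (K + 1)) := tsub_le_tsub_left hEB _
        _ ≤ (1 - δ) * Pr (E (K + 1)) := by
            rw [tsub_le_iff_right, ← add_mul, tsub_add_cancel_of_le hδ1, one_mul]
    have hbound : ∀ K, Pr (E (K + 1)) ≤ (1 - δ) ^ K := by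
      intro K
      induction K with
      | zero => simpa using prob_le_one
      | succ K ih =>
          calc Pr (E (K + 2)) ≤ (1 - δ) * Pr (E (K + 1)) := hkey K
            _ ≤ (1 - δ) * (1 - δ) ^ K := mul_le_mul_right ih _
            _ = (1 - δ) ^ (K + 1) := (pow_succ' _ _).symm
    set T := {s : S | ∃ n : ℕ, ∀ l : Fin m, Z (n + l.1) s = τ l} with hTdef
    have hTmeas : MeasurableSet T := by
      have he : T = ⋃ n : ℕ, ⋂ l : Fin m, (Z (n + l.1)) ⁻¹' {τ l} := by
        ext s; simp [hTdef]
      rw [he]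
      exact MeasurableSet.iUnion fun n => MeasurableSet.iInter fun l =>
        (hZ _) (measurableSet_singleton _)
    have hTc : ∀ K, Tᶜ ⊆ E (K + 1) := by
      intro K s hs
      rw [hEmem]
      intro k _ hBk
      apply hs
      refine ⟨k * m, fun l => ?_⟩
      have h3 := hBk l.1 l.2
      rw [h3, ht]
      simp only [dif_pos l.2, Fin.eta]
    have h0 : Pr Tᶜ = 0 := by
      have hle : ∀ K, Pr Tᶜ ≤ (1 - δ) ^ K := fun K =>
        le_trans (measure_mono (hTc K)) (hbound K)
      have htend : Tendsto (fun K : ℕ => (1 - δ) ^ K) atTop (nhds 0) :=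
        ENNReal.tendsto_pow_atTop_nhds_zero_of_lt_one
          (ENNReal.sub_lt_self ENNReal.one_ne_top one_ne_zero hδ0)
      exact le_antisymm (ge_of_tendsto' htend hle) zero_le
    exact (prob_compl_eq_zero_iff hTmeas).mp h0
end
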